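/- Let G = ⟨S|R⟩ be a C'(1/6)-group satisfying the increasing partial small-cancellation condition (IPSC). Then G satisfies the strong IPSC. -/

import Mathlib

namespace SmallCancel

/-- A word over `S`: a finite sequence of letters from the symmetrized alphabet
`S ∪ S⁻¹`, encoded as pairs `(s, b)` where `b = true` denotes the letter `s`
and `b = false` denotes its formal inverse `s⁻¹`. -/
abbrev Word (S : Type) := List (S × Bool)

/-- The formal inverse of a word. -/
def wInv {S : Type} (w : Word S) : Word S := (w.map fun a => (a.1, !a.2)).reverse

/-- A word is reduced if no letter is immediately followed by its inverse. -/
def Reduced {S : Type} (w : Word S) : Prop := w.Chain' fun a b => b ≠ (a.1, !a.2)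

/-- A word is cyclically reduced if all of its cyclic shifts are reduced. -/
def CyclicallyReduced {S : Type} (w : Word S) : Prop := ∀ n, Reduced (w.rotate n)

/-- `R̄`: the set of all cyclic shifts of elements of `R` and of their inverses. -/
def cyclicClosure {S : Type} (R : Set (Word S)) : Set (Word S) :=
  {w | ∃ r ∈ R, ∃ n, w = r.rotate n ∨ w = (wInv r).rotate n}

/-- `p` is a piece with respect to `R` if it is a prefix of two distinct elements
of `R̄`. -/
def IsPiece {S : Type} (R : Set (Word S)) (p : Word S) : Prop :=
  ∃ r₁ ∈ cyclicClosure R, ∃ r₂ ∈ cyclicClosure R, r₁ ≠ r₂ ∧ p <+: r₁ ∧ p <+: r₂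

/-- The `C'(λ)` small-cancellation condition: every piece `p` that is a subword of
some `r ∈ R̄` satisfies `|p| < λ|r|`. -/
def SmallCancellation {S : Type} (R : Set (Word S)) (lam : ℝ) : Prop :=
  ∀ p, IsPiece R p → ∀ r ∈ cyclicClosure R, p <:+: r →
    (p.length : ℝ) < lam * r.length

/-- The element of the presented group `⟨S | R⟩` represented by a word `w`. -/
def toPresented {S : Type} (R : Set (Word S)) (w : Word S) :
    PresentedGroup {g : FreeGroup S | ∃ r ∈ R, g = FreeGroup.mk r} :=
  QuotientGroup.mk (FreeGroup.mk w)

/-- A word `w` is geodesic if every word representing the same element of the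
presented group `⟨S | R⟩` is at least as long as `w`. -/
def IsGeodesicWord {S : Type} (R : Set (Word S)) (w : Word S) : Prop :=
  ∀ v : Word S, toPresented R v = toPresented R w → w.length ≤ v.length

/-- The finite prefix of length `n` of an infinite word `γ`. -/
def rayPrefix {S : Type} (γ : ℕ → S × Bool) (n : ℕ) : Word S := (List.range n).map γ

/-- A geodesic ray: an infinite word all of whose finite prefixes are geodesic. -/
def IsGeodesicRay {S : Type} (R : Set (Word S)) (γ : ℕ → S × Bool) : Prop :=
  ∀ n, IsGeodesicWord R (rayPrefix γ n)

/-- The intersection function of a ray `γ`: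
`ρ_γ(t) = max{|w| : w is a subword of some r ∈ R̄ with |r| ≤ t and a subword of γ}`. -/
noncomputable def intersectionFn {S : Type} (R : Set (Word S)) (γ : ℕ → S × Bool)
    (t : ℕ) : ℕ :=
  sSup {n | ∃ w : Word S, (∃ r ∈ cyclicClosure R, r.length ≤ t ∧ w <:+: r) ∧
    (∃ m, w <:+: rayPrefix γ m) ∧ w.length = n}

/-- A function is sublinear if `ρ(n)/n → 0`. -/
def Sublinear (ρ : ℕ → ℝ) : Prop :=
  Filter.Tendsto (fun n => ρ n / n) Filter.atTop (nhds 0)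

/-- A weakly increasing function `f : ℕ → ℝ` is viable if `f(n) ≥ 6` for all `n`
and `f(n) → ∞`. -/
def Viable (f : ℕ → ℝ) : Prop :=
  Monotone f ∧ (∀ n, 6 ≤ f n) ∧ Filter.Tendsto f Filter.atTop Filter.atTop

/-- The `C'(1/f)` small-cancellation condition for a set of relators: every piece `p`
that is a subword of some `r ∈ R̄` satisfies `|p| < |r|/f(|r|)`. -/
def CPrimeOverF {S : Type} (R : Set (Word S)) (f : ℕ → ℝ) : Prop :=
  ∀ p, IsPiece R p → ∀ r ∈ cyclicClosure R, p <:+: r →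
    (p.length : ℝ) < (r.length : ℝ) / f r.length

/-- The pair `(x, R)` satisfies the `C'(1/f)` condition: every word `p` that is a
subword both of `x` and of some `r ∈ R̄` satisfies `|p| < |r|/f(|r|)`. -/
def PairCPrimeOverF {S : Type} (x : Word S) (R : Set (Word S)) (f : ℕ → ℝ) : Prop :=
  ∀ p, p <:+: x → ∀ r ∈ cyclicClosure R, p <:+: r →
    (p.length : ℝ) < (r.length : ℝ) / f r.length

/-- The increasing partial small-cancellation condition (IPSC). -/
def IPSC {S : Type} (R : Set (Word S)) : Prop :=
  ∀ n : ℕ → ℕ, (∀ i, 0 < n i) → ∃ f : ℕ → ℝ, Viable f ∧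
    ∀ K : ℕ, ∃ i, K ≤ i ∧ ∃ x y : Word S, x ++ y ∈ cyclicClosure R ∧
      n i ≤ (x ++ y).length ∧ ((x ++ y).length : ℝ) / i ≤ x.length ∧
      PairCPrimeOverF x R f

end SmallCancel

namespace SmallCancel

/-- Drop the initial maximal run of equal letters of a word. -/
def dropHeadRun {S : Type} [DecidableEq S] : Word S → Word S
  | [] => []
  | a :: l => l.dropWhile (fun b => b = a)

/-- The interior of a reduced word `w = s₁^{k₁} ⋯ s_n^{k_n}` (maximal runs) is
`s₂^{k₂} ⋯ s_{n-1}^{k_{n-1}}`: remove the first and last maximal run of letters.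
(For a reduced word, consecutive runs use letters that are neither equal nor
mutually inverse, so maximal runs of equal letters are exactly the blocks
`s_j^{k_j}`.) -/
def interior {S : Type} [DecidableEq S] (w : Word S) : Word S :=
  (dropHeadRun ((dropHeadRun w).reverse)).reverse

/-- The strong increasing partial small-cancellation condition: the IPSC with the
requirement `|x| ≥ |r|/i` replaced by `|x′| ≥ |r|/i` where `x′` is the interior
of `x`. -/
def StrongIPSC {S : Type} [DecidableEq S] (R : Set (Word S)) : Prop :=
  ∀ n : ℕ → ℕ, (∀ i, 0 < n i) → ∃ f : ℕ → ℝ, Viable f ∧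
    ∀ K : ℕ, ∃ i, K ≤ i ∧ ∃ x y : Word S, x ++ y ∈ cyclicClosure R ∧
      n i ≤ (x ++ y).length ∧ ((x ++ y).length : ℝ) / i ≤ (interior x).length ∧
      PairCPrimeOverF x R f

end SmallCancel


namespace SmallCancel

lemma headRun {S : Type} [DecidableEq S] (a : S × Bool) (l : Word S) :
    ∃ k, 1 ≤ k ∧ a :: l = List.replicate k a ++ l.dropWhile (fun b => b = a) := by
  refine ⟨(l.takeWhile (fun b => b = a)).length + 1, by omega, ?_⟩
  have ht : l.takeWhile (fun b => b = a)
      = List.replicate (l.takeWhile (fun b => b = a)).length a := by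
    refine List.eq_replicate_iff.mpr ⟨rfl, ?_⟩
    intro b hb
    have := List.mem_takeWhile_imp hb
    simpa using this
  rw [List.replicate_succ]
  conv_lhs => rw [← List.takeWhile_append_dropWhile (p := fun b => (b = a : Bool)) (l := l)]
  rw [List.cons_append, ← ht]

lemma replicate_prefix {S : Type} (β : S × Bool) {m n : ℕ} (h : m ≤ n) :
    List.replicate m β <+: List.replicate n β :=
  ⟨List.replicate (n - m) β, by rw [← List.replicate_add]; congr 1; omega⟩

lemma exists_bracket {S : Type} [DecidableEq S] (x : Word S) (d : ℕ)
    (hlen : 2 * d + 1 ≤ x.length)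
    (hgood : ∀ β : S × Bool, ¬ (List.replicate (d + 1) β <:+: x)) :
    ∃ x' : Word S, x' <:+: x ∧ x.length ≤ (interior x').length + 2 * d := by
  obtain ⟨a, l, rfl⟩ : ∃ a l, x = a :: l := by
    cases x with
    | nil => simp at hlen
    | cons a l => exact ⟨a, l, rfl⟩
  obtain ⟨k₁, hk₁1, hx1⟩ := headRun a l
  set m := l.dropWhile (fun b => b = a) with hmdef
  have hk₁d : k₁ ≤ d := by
    by_contra hgt
    refine hgood a (List.IsPrefix.isInfix ?_)
    exact (replicate_prefix a (by omega)).trans ⟨m, hx1.symm⟩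
  have hxlen1 : (a :: l).length = k₁ + m.length := by
    rw [hx1]; simp
  have hm_ne : m ≠ [] := by
    intro h; rw [h] at hxlen1; simp only [List.length_nil, Nat.add_zero] at hxlen1; omega
  -- second stage on m.reverse
  obtain ⟨b, l₂, hmr⟩ : ∃ b l₂, m.reverse = b :: l₂ := by
    cases hmr : m.reverse with
    | nil => exact absurd (by simpa using hmr) hm_ne
    | cons b l₂ => exact ⟨b, l₂, rfl⟩
  obtain ⟨k₂, hk₂1, hx2⟩ := headRun b l₂
  set m₂ := l₂.dropWhile (fun c => c = b) with hm₂def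
  have hm' : m = m₂.reverse ++ List.replicate k₂ b := by
    have := congrArg List.reverse (hmr.trans hx2)
    simpa [List.reverse_append, List.reverse_replicate] using this
  have hxfull : a :: l = List.replicate k₁ a ++ m₂.reverse ++ List.replicate k₂ b := by
    rw [hx1, hm']; simp [List.append_assoc]
  have hk₂d : k₂ ≤ d := by
    by_contra hgt
    refine hgood b ?_
    refine List.IsInfix.trans (List.IsPrefix.isInfix (replicate_prefix b (show d + 1 ≤ k₂ by omega)))
      (List.IsSuffix.isInfix ⟨List.replicate k₁ a ++ m₂.reverse, by rw [hxfull]⟩)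
  have hxlen2 : (a :: l).length = k₁ + k₂ + m₂.length := by
    rw [hxfull]; simp [List.length_append, List.length_replicate]; omega
  have hm₂_ne : m₂ ≠ [] := by
    intro h; rw [h] at hxlen2; simp only [List.length_nil, Nat.add_zero] at hxlen2; omega
  obtain ⟨c, m₃, hm₂r⟩ : ∃ c m₃, m₂.reverse = c :: m₃ := by
    cases hmr2 : m₂.reverse with
    | nil => exact absurd (by simpa using hmr2) hm₂_ne
    | cons c m₃ => exact ⟨c, m₃, rfl⟩
  -- head of m₂.reverse is head of m, which is not a
  have hca : ¬ (c = a) := by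
    have hhead : m.head hm_ne = c := by
      have : m = c :: (m₃ ++ List.replicate k₂ b) := by
        rw [hm', hm₂r]; simp
      simp [this]
    have := List.head_dropWhile_not (fun b => (b = a : Bool)) (l := l) hm_ne
    rw [hhead] at this
    simpa using this
  -- head of m₂ is not b
  have hm₂b : m₂.dropWhile (fun c => c = b) = m₂ := by
    rw [hm₂def]; exact List.dropWhile_idempotent _ _
  -- the bracket word
  refine ⟨a :: (m₂.reverse ++ [b]), ?_, ?_⟩
  · refine ⟨List.replicate (k₁ - 1) a, List.replicate (k₂ - 1) b, ?_⟩
    rw [hxfull]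
    have h1 : List.replicate k₁ a = List.replicate (k₁ - 1) a ++ [a] := by
      have : k₁ = (k₁ - 1) + 1 := by omega
      rw [this, List.replicate_add]; simp
    have h2 : List.replicate k₂ b = [b] ++ List.replicate (k₂ - 1) b := by
      have : k₂ = 1 + (k₂ - 1) := by omega
      rw [this, List.replicate_add]; simp
    rw [h1, h2]; simp
  · have hDH1 : dropHeadRun (a :: (m₂.reverse ++ [b])) = m₂.reverse ++ [b] := by
      show (m₂.reverse ++ [b]).dropWhile (fun e => e = a) = m₂.reverse ++ [b]
      rw [hm₂r]
      rw [List.cons_append, List.dropWhile_cons]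
      simp [hca]
    have hrev : (m₂.reverse ++ [b]).reverse = b :: m₂ := by simp
    have hDH2 : dropHeadRun (b :: m₂) = m₂ := hm₂b
    have hint : interior (a :: (m₂.reverse ++ [b])) = m₂.reverse := by
      unfold interior
      rw [hDH1, hrev, hDH2]
    rw [hint]
    simp only [List.length_reverse]
    omega

lemma cc_rotate {S : Type} {R : Set (Word S)} {w : Word S}
    (h : w ∈ cyclicClosure R) (d : ℕ) : w.rotate d ∈ cyclicClosure R := by
  obtain ⟨r, hr, n, hw | hw⟩ := h
  · exact ⟨r, hr, n + d, Or.inl (by rw [hw, List.rotate_rotate])⟩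
  · exact ⟨r, hr, n + d, Or.inr (by rw [hw, List.rotate_rotate])⟩

lemma infix_rotate {S : Type} {p w : Word S} (h : p <:+: w) :
    ∃ d y, w.rotate d = p ++ y := by
  obtain ⟨u, v, huv⟩ := h
  refine ⟨u.length, v ++ u, ?_⟩
  have hlen : u.length ≤ w.length := by
    rw [← huv]; simp
  rw [List.rotate_eq_drop_append_take hlen, ← huv]
  rw [List.append_assoc u p v]
  rw [List.drop_left, List.take_left, List.append_assoc]

end SmallCancel

open SmallCancel

/-- Lemma 3.9 of the paper. Let `G = ⟨S|R⟩` be a `C'(1/6)`-group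
satisfying the IPSC. Then `G` satisfies the strong IPSC. -/
theorem IPSC_implies_strongIPSC {S : Type} [Finite S] [DecidableEq S]
    (R : Set (Word S)) (hRcyc : ∀ r ∈ R, CyclicallyReduced r)
    (hSC : SmallCancellation R (1/6))
    (hIPSC : IPSC R) :
    StrongIPSC R := by
  classical
  haveI : Fintype (S × Bool) := Fintype.ofFinite _
  intro n₀ hn₀
  -- the set of relator lengths carrying a "bad" (giant-run) pair-compatible witness
  set A : (S × Bool) → ℕ → Set ℕ := fun β i =>
    {L | ∃ x y : Word S, x ++ y ∈ cyclicClosure R ∧ (x ++ y).length = L ∧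
      (∃ g : ℕ → ℝ, Viable g ∧ PairCPrimeOverF x R g) ∧
      List.replicate (L / (8 * i) + 1) β <:+: x} with hAdef
  set T : ℕ → ℕ := fun j => (Finset.univ : Finset (S × Bool)).sup
      (fun β => if h : BddAbove (A β j) then sSup (A β j) else 0) with hTdef
  set n₂ : ℕ → ℕ := fun j =>
      max (8 * j * 2 ^ j) (max ((Finset.range (2 * j + 1)).sup n₀) (T j + 1)) with hn₂def
  have hn₂pos : ∀ j, 0 < n₂ j := by
    intro j
    have : 0 < T j + 1 := Nat.succ_pos _
    calc 0 < T j + 1 := this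
      _ ≤ max ((Finset.range (2 * j + 1)).sup n₀) (T j + 1) := le_max_right _ _
      _ ≤ n₂ j := le_max_right _ _
  obtain ⟨f, hf, hwit⟩ := hIPSC n₂ hn₂pos
  refine ⟨f, hf, ?_⟩
  intro K
  by_contra hcon
  -- every witness must be bad
  have keyBad : ∀ t : ℕ, ∃ (i : ℕ) (x y : Word S),
      (max K 1 + t ≤ i) ∧ x ++ y ∈ cyclicClosure R ∧ n₂ i ≤ (x ++ y).length ∧
      ((x ++ y).length : ℝ) / i ≤ x.length ∧ PairCPrimeOverF x R f ∧
      ∃ β : S × Bool, List.replicate ((x ++ y).length / (8 * i) + 1) β <:+: x := by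
    intro t
    obtain ⟨i, hKi, x, y, hCC, hlenw, hq, hpair⟩ := hwit (max K 1 + t)
    refine ⟨i, x, y, hKi, hCC, hlenw, hq, hpair, ?_⟩
    by_contra hb
    push_neg at hb
    -- good case: build a strong witness, contradicting hcon
    set L := (x ++ y).length with hLdef
    have hi1 : 1 ≤ i := le_trans (le_trans (le_max_right K 1) (Nat.le_add_right _ t)) hKi
    have hL8 : 8 * i * 2 ^ i ≤ L := le_trans (le_max_left _ _) hlenw
    have hiR : (0:ℝ) < (i : ℝ) := by exact_mod_cast hi1
    set d := L / (8 * i) with hddef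
    have h2pow : 2 ≤ 2 ^ i := by
      calc 2 = 2 ^ 1 := rfl
        _ ≤ 2 ^ i := Nat.pow_le_pow_right (by norm_num) hi1
    have hL16 : 16 * i ≤ L := by nlinarith
    have hq' : L / i ≤ x.length := by
      have h1 : ((L / i : ℕ) : ℝ) ≤ (L : ℝ) / (i : ℝ) := Nat.cast_div_le
      have h2 : ((L / i : ℕ) : ℝ) ≤ (x.length : ℝ) := le_trans h1 hq
      exact_mod_cast h2
    have hxlen : 2 * d + 1 ≤ x.length := by
      have hdd : d = (L / i) / 8 := by
        rw [hddef, Nat.div_div_eq_div_mul, Nat.mul_comm 8 i]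
      have h16 : 16 ≤ L / i := by
        rw [Nat.le_div_iff_mul_le (by omega : 0 < i)]; omega
      have h8 : (L / i) / 8 * 8 ≤ L / i := Nat.div_mul_le_self _ _
      omega
    obtain ⟨x', hx'inf, hx'len⟩ := exists_bracket x d hxlen hb
    have hxinf : x' <:+: x ++ y := hx'inf.trans ⟨[], y, by simp⟩
    obtain ⟨dd, y', hrot⟩ := infix_rotate hxinf
    have hlen' : (x' ++ y').length = L := by
      rw [← hrot, List.length_rotate]
    apply hcon
    have hKi' : K ≤ i := le_trans (le_trans (le_max_left K 1) (Nat.le_add_right _ t)) hKi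
    refine ⟨2 * i, by omega, x', y', ?_, ?_, ?_, ?_⟩
    · rw [← hrot]; exact cc_rotate hCC dd
    · rw [hlen']
      calc n₀ (2 * i) ≤ (Finset.range (2 * i + 1)).sup n₀ :=
            Finset.le_sup (Finset.mem_range.mpr (by omega))
        _ ≤ n₂ i := le_trans (le_max_left _ _) (le_max_right _ _)
        _ ≤ L := hlenw
    · rw [hlen']
      have hIx : (x.length : ℝ) ≤ ((interior x').length : ℝ) + 2 * (d : ℝ) := by
        exact_mod_cast hx'len
      have hdR : (d : ℝ) ≤ (L : ℝ) / (8 * (i : ℝ)) := by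
        have h1 : ((L / (8 * i) : ℕ) : ℝ) ≤ (L : ℝ) / ((8 * i : ℕ) : ℝ) := Nat.cast_div_le
        rw [hddef]
        convert h1 using 2
        push_cast; ring
      have hcast : ((2 * i : ℕ) : ℝ) = 2 * (i : ℝ) := by push_cast; ring
      rw [hcast]
      have hLR : (0:ℝ) ≤ (L : ℝ) := Nat.cast_nonneg _
      have heq : (L:ℝ) / (2 * (i:ℝ)) + 2 * ((L:ℝ) / (8 * (i:ℝ))) = (3/4) * ((L:ℝ) / (i:ℝ)) := by
        field_simp
        ring
      have hpos : 0 ≤ (L:ℝ) / (i:ℝ) := div_nonneg hLR (le_of_lt hiR)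
      linarith [hq, hIx, hdR, heq, hpos]
    · intro p hp r' hr' hpr'
      exact hpair p (hp.trans hx'inf) r' hr' hpr'
  -- choose the witnesses
  choose i xw yw hKi hCC hlen hq hpair β hβ using keyBad
  -- pigeonhole: an infinitely recurring letter
  obtain ⟨β₀, hfib⟩ : ∃ b, (β ⁻¹' {b}).Infinite := by
    obtain ⟨b, hb⟩ := Finite.exists_infinite_fiber β
    exact ⟨b, Set.infinite_coe_iff.mp hb⟩
  obtain ⟨t₀, ht₀⟩ := hfib.nonempty
  have ht₀β : β t₀ = β₀ := ht₀
  set i₀ := i t₀ with hi₀def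
  have hi₀1 : 1 ≤ i₀ := le_trans (le_trans (le_max_right K 1) (Nat.le_add_right _ t₀)) (hKi t₀)
  -- unboundedness of the supply at quality i₀
  have hAub : ¬ BddAbove (A β₀ i₀) := by
    intro hbdd
    have hmem : (xw t₀ ++ yw t₀).length ∈ A β₀ i₀ := by
      refine ⟨xw t₀, yw t₀, hCC t₀, rfl, ⟨f, hf, hpair t₀⟩, ?_⟩
      rw [← ht₀β]
      exact hβ t₀
    have h1 : (xw t₀ ++ yw t₀).length ≤ sSup (A β₀ i₀) := le_csSup hbdd hmem
    have h2 : sSup (A β₀ i₀) ≤ T i₀ := by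
      have h3 := Finset.le_sup (f := fun β => if h : BddAbove (A β i₀) then sSup (A β i₀) else 0)
        (Finset.mem_univ β₀)
      simp only [dif_pos hbdd] at h3
      exact h3
    have h4 : T i₀ + 1 ≤ n₂ i₀ := le_trans (le_max_right _ _) (le_max_right _ _)
    have h5 : n₂ i₀ ≤ (xw t₀ ++ yw t₀).length := hlen t₀
    omega
  -- threshold where f exceeds 8 i₀
  obtain ⟨N, hN⟩ := (hf.2.2.eventually_ge_atTop ((8 * i₀ : ℕ) : ℝ)).exists_forall_of_atTop
  obtain ⟨Ls, hLsA, hLsN⟩ := (not_bddAbove_iff.mp hAub) N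
  set as := Ls / (8 * i₀) + 1 with hasdef
  -- pick a later witness with the same letter and big index
  obtain ⟨t₁, ht₁fib, ht₁big⟩ := hfib.exists_gt as
  have ht₁β : β t₁ = β₀ := ht₁fib
  have hi₁t : as < i t₁ :=
    lt_of_lt_of_le ht₁big (le_trans (Nat.le_add_left t₁ _) (hKi t₁))
  have hc : as ≤ (xw t₁ ++ yw t₁).length / (8 * i t₁) + 1 := by
    have h1 : 8 * (i t₁) * 2 ^ (i t₁) ≤ (xw t₁ ++ yw t₁).length :=
      le_trans (le_max_left _ _) (hlen t₁)
    have hi₁1 : 1 ≤ i t₁ :=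
      le_trans (le_trans (le_max_right K 1) (Nat.le_add_right _ t₁)) (hKi t₁)
    have h2 : 2 ^ (i t₁) ≤ (xw t₁ ++ yw t₁).length / (8 * i t₁) := by
      rw [Nat.le_div_iff_mul_le (by omega : 0 < 8 * i t₁)]
      calc 2 ^ (i t₁) * (8 * i t₁) = 8 * (i t₁) * 2 ^ (i t₁) := by ring
        _ ≤ _ := h1
    have h3 : i t₁ < 2 ^ (i t₁) := Nat.lt_two_pow_self
    omega
  have hrep : List.replicate as β₀ <:+: xw t₁ := by
    have h5 := hβ t₁
    rw [ht₁β] at h5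
    exact (List.IsPrefix.isInfix (replicate_prefix β₀ hc)).trans h5
  obtain ⟨xs, ys, hsCC, hsLen, _, hsrep⟩ := hLsA
  have hxs_inf : xs <:+: xs ++ ys := ⟨[], ys, by simp⟩
  have hrepin_s : List.replicate as β₀ <:+: xs ++ ys := hsrep.trans hxs_inf
  have hineq := hpair t₁ (List.replicate as β₀) hrep (xs ++ ys) hsCC hrepin_s
  rw [List.length_replicate, hsLen] at hineq
  have hfLs : ((8 * i₀ : ℕ) : ℝ) ≤ f Ls := hN Ls (le_of_lt hLsN)
  have hLsas : Ls < 8 * i₀ * as := by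
    have h1 : Ls < 8 * i₀ * (Ls / (8 * i₀)) + 8 * i₀ := by
      conv_lhs => rw [← Nat.div_add_mod Ls (8 * i₀)]
      have hmod : Ls % (8 * i₀) < 8 * i₀ := Nat.mod_lt _ (by omega)
      omega
    calc Ls < 8 * i₀ * (Ls / (8 * i₀)) + 8 * i₀ := h1
      _ = 8 * i₀ * as := by rw [hasdef]; ring
  have h8pos : (0:ℝ) < ((8 * i₀ : ℕ) : ℝ) := by
    have : 0 < 8 * i₀ := by omega
    exact_mod_cast this
  have hfpos : (0:ℝ) < f Ls := lt_of_lt_of_le h8pos hfLs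
  have h6 : (Ls:ℝ) / f Ls ≤ (Ls:ℝ) / ((8 * i₀ : ℕ):ℝ) :=
    div_le_div_of_nonneg_left (Nat.cast_nonneg _) h8pos hfLs
  have h7 : (Ls:ℝ) / ((8 * i₀ : ℕ):ℝ) < (as : ℝ) := by
    rw [div_lt_iff₀ h8pos]
    calc (Ls : ℝ) < ((8 * i₀ * as : ℕ) : ℝ) := by exact_mod_cast hLsas
      _ = (as : ℝ) * ((8 * i₀ : ℕ) : ℝ) := by push_cast; ring
  linarith
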